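/- Let s and t be coprime positive integers. Each orbit under cyclic rotation of words with s letters S and t letters T contains exactly one s/t-ballot word; consequently the number of s/t-ballot words equals (1/(s+t))·C(s+t, s). -/

import Mathlib

inductive Letter | S | T
deriving DecidableEq, Repr

open Letter

/-- Number of occurrences of `u` as a (not necessarily contiguous) subsequence of `w`. -/
def cnt (u w : List Letter) : ℕ := w.sublists.count u


/-- `w` is an s/t-ballot word. -/
def IsBallot (s t : ℕ) (w : List Letter) : Prop :=
  w.count S = s ∧ w.count T = t ∧ ∀ p, p <+: w → p.count T * s ≤ p.count S * t

namespace Stmt6Aux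
open Letter

/-- Weighted height of a word. -/
def F (s t : ℕ) (p : List Letter) : ℤ := (p.count S : ℤ) * t - (p.count T : ℤ) * s

lemma F_append (s t : ℕ) (a b : List Letter) : F s t (a ++ b) = F s t a + F s t b := by
  simp only [F, List.count_append]
  push_cast
  ring

lemma F_nonneg_iff (s t : ℕ) (p : List Letter) :
    0 ≤ F s t p ↔ p.count T * s ≤ p.count S * t := by
  rw [F, sub_nonneg]
  exact_mod_cast Iff.rfl

lemma count_S_add_count_T (l : List Letter) : l.count S + l.count T = l.length := by
  induction l with
  | nil => simp
  | cons a l ih => cases a <;> simp [List.count_cons] <;> omega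

/-- Height function on the doubled word. -/
def H (s t : ℕ) (w : List Letter) (k : ℕ) : ℤ := F s t ((w ++ w).take k)

lemma H_add (s t : ℕ) (w : List Letter) (n k : ℕ) :
    H s t w (n + k) = H s t w n + F s t (((w ++ w).drop n).take k) := by
  rw [H, H, List.take_add, F_append]

lemma length_w {s t : ℕ} {w : List Letter} (hS : w.count S = s) (hT : w.count T = t) :
    w.length = s + t := by
  rw [← count_S_add_count_T, hS, hT]

lemma F_w {s t : ℕ} {w : List Letter} (hS : w.count S = s) (hT : w.count T = t) :
    F s t w = 0 := by
  simp [F, hS, hT]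
  ring

lemma H_period {s t : ℕ} {w : List Letter} (hS : w.count S = s) (hT : w.count T = t)
    {k : ℕ} (hk : k ≤ s + t) : H s t w (s + t + k) = H s t w k := by
  have hlen : w.length = s + t := length_w hS hT
  rw [H_add]
  rw [← hlen] at hk ⊢
  rw [List.drop_left]
  show F s t ((w ++ w).take w.length) + F s t (w.take k) = F s t ((w ++ w).take k)
  rw [List.take_left, F_w hS hT, List.take_append_of_le_length hk]
  ring

lemma rotate_take {w : List Letter} {n k : ℕ} (hn : n ≤ w.length) (hk : k ≤ w.length) :
    (w.rotate n).take k = ((w ++ w).drop n).take k := by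
  rw [List.rotate_eq_drop_append_take hn, List.drop_append_of_le_length hn]
  rcases le_or_gt k (w.drop n).length with h | h
  · rw [List.take_append_of_le_length h, List.take_append_of_le_length h]
  · rw [List.take_append, List.take_append]
    congr 1
    rw [List.take_take]
    have hh : k - (w.drop n).length ≤ n := by
      rw [List.length_drop] at h ⊢
      omega
    rw [min_eq_left hh]

lemma ballot_rotate_iff {s t : ℕ} {w : List Letter} (hS : w.count S = s) (hT : w.count T = t)
    {n : ℕ} (hn : n < s + t) :
    IsBallot s t (w.rotate n) ↔ ∀ m < s + t, H s t w n ≤ H s t w m := by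
  have hlen : w.length = s + t := length_w hS hT
  have key : ∀ k ≤ s + t, F s t ((w.rotate n).take k) = H s t w (n + k) - H s t w n := by
    intro k hk
    rw [rotate_take (by omega) (by omega), H_add]
    ring
  constructor
  · rintro ⟨-, -, hpre⟩ m hm
    rcases le_or_gt n m with h | h
    · have h0 : 0 ≤ F s t ((w.rotate n).take (m - n)) :=
        (F_nonneg_iff _ _ _).2 (hpre _ (List.take_prefix _ _))
      rw [key (m - n) (by omega), show n + (m - n) = m by omega] at h0
      linarith
    · have h0 : 0 ≤ F s t ((w.rotate n).take (m + (s + t) - n)) :=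
        (F_nonneg_iff _ _ _).2 (hpre _ (List.take_prefix _ _))
      rw [key (m + (s + t) - n) (by omega),
        show n + (m + (s + t) - n) = (s + t) + m by omega, H_period hS hT (by omega)] at h0
      linarith
  · intro hmin
    refine ⟨by rw [(List.rotate_perm w n).count_eq, hS],
      by rw [(List.rotate_perm w n).count_eq, hT], ?_⟩
    intro p hp
    have hple : p.length ≤ s + t := by
      have := hp.length_le
      rwa [List.length_rotate, hlen] at this
    rw [List.prefix_iff_eq_take] at hp
    rw [← F_nonneg_iff, hp, key p.length hple]
    rcases lt_or_ge (n + p.length) (s + t) with h | h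
    · have := hmin (n + p.length) h
      linarith
    · rw [show n + p.length = (s + t) + (n + p.length - (s + t)) by omega,
        H_period hS hT (by omega)]
      have := hmin (n + p.length - (s + t)) (by omega)
      linarith

lemma min_unique {s t : ℕ} {w : List Letter} (hs : 0 < s) (ht : 0 < t)
    (hst : Nat.Coprime s t) (hS : w.count S = s) (hT : w.count T = t)
    {n m : ℕ} (hn : n < s + t) (hm : m < s + t) (hnm : n ≤ m)
    (heq : H s t w n = H s t w m) : n = m := by
  by_contra hne
  have hlt : n < m := by omega
  have hlen : w.length = s + t := length_w hS hT
  set q := ((w ++ w).drop n).take (m - n) with hq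
  have h1 : H s t w m = H s t w n + F s t q := by
    have := H_add s t w n (m - n)
    rwa [show n + (m - n) = m by omega] at this
  have hFq : F s t q = 0 := by linarith
  have ha : q.count S * t = q.count T * s := by
    have h2 : (q.count S : ℤ) * t = (q.count T : ℤ) * s := by
      rw [F] at hFq
      linarith
    exact_mod_cast h2
  obtain ⟨c, hc⟩ := hst.dvd_of_dvd_mul_right ⟨q.count T, by rw [ha]; ring⟩
  have hbt : q.count T = c * t := by
    have h3 : s * (c * t) = s * q.count T := by
      rw [← mul_assoc, ← hc, ha]
      ring
    exact (Nat.eq_of_mul_eq_mul_left hs h3).symm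
  have hql : q.length = m - n := by
    rw [hq, List.length_take, List.length_drop, List.length_append, hlen]
    omega
  have hsum : q.count S + q.count T = m - n := by rw [count_S_add_count_T, hql]
  rw [hc, hbt] at hsum
  rcases Nat.eq_zero_or_pos c with rfl | hcpos
  · simp at hsum
    omega
  · have : s + t ≤ s * c + c * t := by
      calc s + t = s * 1 + 1 * t := by ring
        _ ≤ s * c + c * t := Nat.add_le_add (Nat.mul_le_mul_left _ hcpos) (Nat.mul_le_mul_right _ hcpos)
    omega

lemma count_ofFn {n : ℕ} (f : Fin n → Letter) (a : Letter) :
    (List.ofFn f).count a = (Finset.univ.filter (fun i => f i = a)).card := by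
  induction n with
  | zero => simp
  | succ n ih =>
    rw [List.ofFn_succ, List.count_cons, ih]
    simp only [Finset.card_filter, Fin.sum_univ_succ, beq_iff_eq]
    exact Nat.add_comm _ _

end Stmt6Aux

open Stmt6Aux in
theorem stmt6 (s t : ℕ) (hs : 0 < s) (ht : 0 < t) (hst : Nat.Coprime s t) :
    (∀ w : List Letter, w.count S = s → w.count T = t →
        ∃! n : Fin (s + t), IsBallot s t (w.rotate n)) ∧
      Nat.card {w : List Letter // IsBallot s t w} * (s + t) = (s + t).choose s := by
  have hN : 0 < s + t := by omega
  have part1 : ∀ w : List Letter, w.count S = s → w.count T = t →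
      ∃! n : Fin (s + t), IsBallot s t (w.rotate n) := by
    intro w hS hT
    obtain ⟨n₀, hn₀, hmin⟩ := Finset.exists_min_image (Finset.range (s + t)) (H s t w)
      ⟨0, Finset.mem_range.2 hN⟩
    rw [Finset.mem_range] at hn₀
    refine ⟨⟨n₀, hn₀⟩, ?_, ?_⟩
    · exact (ballot_rotate_iff hS hT hn₀).2
        (fun m hm => hmin m (Finset.mem_range.2 hm))
    · rintro ⟨m, hm⟩ hb
      have h1 := (ballot_rotate_iff hS hT hm).1 hb
      have h2 : H s t w m = H s t w n₀ :=
        le_antisymm (h1 n₀ hn₀) (hmin m (Finset.mem_range.2 hm))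
      apply Fin.ext
      show m = n₀
      rcases le_total m n₀ with h | h
      · exact min_unique hs ht hst hS hT hm hn₀ h h2
      · exact (min_unique hs ht hst hS hT hn₀ hm h h2.symm).symm
  refine ⟨part1, ?_⟩
  -- counting words with given letter counts
  have hWd : Nat.card {w : List Letter // w.count S = s ∧ w.count T = t} = (s + t).choose s := by
    have hbij : Function.Bijective
        (fun A : {A : Finset (Fin (s + t)) // A.card = s} =>
          (⟨List.ofFn (fun i => if i ∈ A.1 then S else T), by
            have hfilt : (Finset.univ.filter (fun i : Fin (s + t) => (if i ∈ A.1 then S else T) = S)) = A.1 := by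
              ext i
              by_cases h : i ∈ A.1 <;> simp [h]
            have hcS : (List.ofFn (fun i : Fin (s + t) => if i ∈ A.1 then S else T)).count S = s := by
              rw [count_ofFn, hfilt, A.2]
            constructor
            · exact hcS
            · have hlen := List.length_ofFn (f := fun i : Fin (s + t) => if i ∈ A.1 then S else T)
              have hsum := count_S_add_count_T (List.ofFn (fun i : Fin (s + t) => if i ∈ A.1 then S else T))
              omega⟩ :
            {w : List Letter // w.count S = s ∧ w.count T = t})) := by
      constructor
      · rintro ⟨A, hA⟩ ⟨B, hB⟩ hAB
        have h1 : List.ofFn (fun i : Fin (s + t) => if i ∈ A then S else T) =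
            List.ofFn (fun i : Fin (s + t) => if i ∈ B then S else T) := congrArg Subtype.val hAB
        rw [List.ofFn_inj] at h1
        apply Subtype.ext
        ext i
        have h2 := congrFun h1 i
        by_cases hiA : i ∈ A <;> by_cases hiB : i ∈ B <;> simp [hiA, hiB] at h2 ⊢
      · rintro ⟨w, hS, hT⟩
        have hlen : w.length = s + t := length_w hS hT
        set f0 : Fin (s + t) → Letter := fun i => w[(i : ℕ)]'(by omega) with hf0
        have hofn : List.ofFn f0 = w := by
          apply List.ext_getElem
          · simp [hlen]
          · intro i h1 h2
            rw [List.getElem_ofFn]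
        refine ⟨⟨Finset.univ.filter (fun i => f0 i = S), ?_⟩, ?_⟩
        · have := count_ofFn f0 S
          rw [hofn, hS] at this
          exact this.symm
        · apply Subtype.ext
          show (List.ofFn fun i : Fin (s + t) =>
            if i ∈ Finset.univ.filter (fun i => f0 i = S) then S else T) = w
          rw [← hofn]
          congr 1
          funext i
          by_cases h : f0 i = S
          · simp [h]
          · have : f0 i = T := by cases hfi : f0 i <;> simp_all
            simp [h, this]
    have := Nat.card_eq_of_bijective _ hbij
    rw [← this, Nat.card_eq_fintype_card, Fintype.card_finset_len, Fintype.card_fin]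
  -- bijection between ballot words × rotations and all words
  have hbij2 : Function.Bijective
      (fun p : {w : List Letter // IsBallot s t w} × Fin (s + t) =>
        (⟨p.1.1.rotate p.2, by
          obtain ⟨hS, hT, -⟩ := p.1.2
          exact ⟨by rw [(List.rotate_perm _ _).count_eq, hS],
            by rw [(List.rotate_perm _ _).count_eq, hT]⟩⟩ :
          {w : List Letter // w.count S = s ∧ w.count T = t})) := by
    have back : ∀ (b : List Letter), IsBallot s t b → ∀ n : Fin (s + t),
        (b.rotate n).rotate ((s + t - n) % (s + t)) = b := by
      intro b hb n
      have hblen : b.length = s + t := length_w hb.1 hb.2.1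
      have hrlen : (b.rotate n).length = s + t := by rw [List.length_rotate, hblen]
      have hmod := List.rotate_mod (b.rotate (n : ℕ)) (s + t - n)
      rw [hrlen] at hmod
      rw [hmod, List.rotate_rotate, show (n : ℕ) + (s + t - (n : ℕ)) = s + t from by omega,
        ← hblen, List.rotate_length]
    constructor
    · rintro ⟨⟨b1, hb1⟩, n1⟩ ⟨⟨b2, hb2⟩, n2⟩ heq
      have hval : b1.rotate n1 = b2.rotate n2 := congrArg Subtype.val heq
      have hwS : (b1.rotate (n1 : ℕ)).count S = s := by
        rw [(List.rotate_perm _ _).count_eq, hb1.1]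
      have hwT : (b1.rotate (n1 : ℕ)).count T = t := by
        rw [(List.rotate_perm _ _).count_eq, hb1.2.1]
      obtain ⟨n, -, huniq⟩ := part1 (b1.rotate (n1 : ℕ)) hwS hwT
      have h1 : (b1.rotate (n1 : ℕ)).rotate ((s + t - n1) % (s + t)) = b1 := back b1 hb1 n1
      have h2 : (b1.rotate (n1 : ℕ)).rotate ((s + t - n2) % (s + t)) = b2 := by
        rw [hval]
        exact back b2 hb2 n2
      have e1 : (⟨(s + t - n1) % (s + t), Nat.mod_lt _ hN⟩ : Fin (s + t)) = n :=
        huniq _ (by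
          show IsBallot s t ((b1.rotate (n1 : ℕ)).rotate ((s + t - (n1 : ℕ)) % (s + t)))
          rw [h1]; exact hb1)
      have e2 : (⟨(s + t - n2) % (s + t), Nat.mod_lt _ hN⟩ : Fin (s + t)) = n :=
        huniq _ (by
          show IsBallot s t ((b1.rotate (n1 : ℕ)).rotate ((s + t - (n2 : ℕ)) % (s + t)))
          rw [h2]; exact hb2)
      have emod : (s + t - (n1 : ℕ)) % (s + t) = (s + t - (n2 : ℕ)) % (s + t) := by
        have := e1.trans e2.symm
        exact congrArg Fin.val this
      have hn1 : (n1 : ℕ) < s + t := n1.2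
      have hn2 : (n2 : ℕ) < s + t := n2.2
      have hnn : (n1 : ℕ) = n2 := by
        by_cases z1 : (n1 : ℕ) = 0 <;> by_cases z2 : (n2 : ℕ) = 0
        · omega
        · rw [z1, Nat.sub_zero, Nat.mod_self, Nat.mod_eq_of_lt (by omega)] at emod
          omega
        · rw [z2, Nat.sub_zero, Nat.mod_self, Nat.mod_eq_of_lt (by omega)] at emod
          omega
        · rw [Nat.mod_eq_of_lt (by omega), Nat.mod_eq_of_lt (by omega)] at emod
          omega
      have : b1 = b2 := by rw [← h1, ← h2, emod]
      simp only [Prod.mk.injEq]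
      exact ⟨Subtype.ext this, Fin.ext hnn⟩
    · rintro ⟨w, hS, hT⟩
      obtain ⟨n, hn, -⟩ := part1 w hS hT
      have hwrlen : (w.rotate n).length = s + t := by
        rw [List.length_rotate, length_w hS hT]
      refine ⟨⟨⟨w.rotate n, hn⟩, ⟨(s + t - n) % (s + t), Nat.mod_lt _ hN⟩⟩, ?_⟩
      apply Subtype.ext
      show (w.rotate (n : ℕ)).rotate ((s + t - (n : ℕ)) % (s + t)) = w
      have hmod := List.rotate_mod (w.rotate (n : ℕ)) (s + t - n)
      rw [hwrlen] at hmod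
      rw [hmod, List.rotate_rotate, show (n : ℕ) + (s + t - (n : ℕ)) = s + t from by omega,
        ← length_w hS hT, List.rotate_length]
  have := Nat.card_eq_of_bijective _ hbij2
  rw [Nat.card_prod, Nat.card_eq_fintype_card (α := Fin (s + t)), Fintype.card_fin] at this
  rw [this, hWd]
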